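/- Let p be an odd prime and c ∈ F_p with c ≠ ±2 and c^2 - 4 a nonzero square in F_p. Then the trinomial coefficient T(p-2, (p-1)/2), computed in F_p, equals (c/(2(c^2-4))) * χ(-c-2), where χ is the quadratic character of F_p. -/

import Mathlib

open Polynomial LaurentPolynomial Finset

/-- The trinomial coefficient: coefficient of `x^k` in `(x + c + x⁻¹)^n` over `R`. -/
noncomputable def triCoeff (R : Type*) [CommRing R] (c : R) (n : ℕ) (k : ℤ) : R :=
  (((LaurentPolynomial.T 1 + LaurentPolynomial.C c + LaurentPolynomial.T (-1)) ^ n :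
      LaurentPolynomial R).coeff : ℤ →₀ R) k


lemma weighted_geom {R : Type*} [CommRing R] (y : R) (n : ℕ) :
    (y - 1) * ∑ j ∈ Finset.range n, ((j : R) + 1) * y ^ j
      = (n : R) * y ^ n - ∑ j ∈ Finset.range n, y ^ j := by
  induction n with
  | zero => simp
  | succ n ih =>
    rw [Finset.sum_range_succ, Finset.sum_range_succ (fun j => y ^ j), mul_add, ih]
    push_cast
    ring

lemma sum_window {R : Type*} [CommRing R] (N : ℕ) (F : ℕ → R) (C : ℕ) (hC : C = 3 * N)
    (h1 : ∀ i, i < N → F i = 0) (h2 : ∀ i, 2 * N ≤ i → F i = 0) :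
    ∑ i ∈ Finset.range C, F i = ∑ s ∈ Finset.range N, F (N + s) := by
  subst hC
  rw [Finset.range_eq_Ico,
      ← Finset.sum_Ico_consecutive _ (Nat.zero_le N) (by omega : N ≤ 3 * N),
      ← Finset.sum_Ico_consecutive _ (by omega : N ≤ 2 * N) (by omega : 2 * N ≤ 3 * N),
      Finset.sum_eq_zero (fun i hi => h1 i (Finset.mem_Ico.mp hi).2),
      Finset.sum_eq_zero (fun i hi => h2 i (Finset.mem_Ico.mp hi).1),
      Finset.sum_Ico_eq_sum_range]
  rw [show 2 * N - N = N by omega]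
  simp
lemma triCoeff_eq {R : Type*} [CommRing R] (c : R) (n k : ℕ) :
    triCoeff R c n (k : ℤ) = ((X ^ 2 + Polynomial.C c * X + 1 : R[X]) ^ n).coeff (n + k) := by
  have h1 : (T 1 + LaurentPolynomial.C c + T (-1) : R[T;T⁻¹])
      = T (-1) * (X ^ 2 + Polynomial.C c * X + 1 : R[X]).toLaurent := by
    simp only [map_add, map_mul, map_pow, map_one, Polynomial.toLaurent_X,
      Polynomial.toLaurent_C]
    rw [mul_add, mul_add]
    rw [show (T 1 : R[T;T⁻¹]) ^ 2 = T 2 by rw [T_pow]; norm_num]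
    rw [show (T (-1) : R[T;T⁻¹]) * T 2 = T 1 by rw [← T_add]; norm_num]
    rw [mul_one, mul_left_comm, ← T_add]
    norm_num
  unfold triCoeff
  rw [h1, mul_pow, T_pow, ← map_pow]
  rw [Polynomial.toLaurent_apply]
  have h2 : (T ((n : ℕ) * (-1) : ℤ) : R[T;T⁻¹]) = AddMonoidAlgebra.single (-(n : ℤ)) 1 := by
    rw [show ((n:ℤ) * -1) = -(n:ℤ) by ring]
    rfl
  rw [h2]
  rw [AddMonoidAlgebra.coeff_single_mul_apply, one_mul]
  have hpt : (-(-(n : ℤ)) + (k : ℤ)) = ((n + k : ℕ) : ℤ) := by push_cast; ring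
  rw [hpt]
  exact Finsupp.mapDomain_apply Nat.cast_injective _ _
lemma X_sub_C_pow_card_sub_two (p : ℕ) [Fact p.Prime] (α : ZMod p) (hα : α ≠ 0) :
    (X - Polynomial.C α) ^ (p - 2)
      = - ∑ j ∈ Finset.range (p - 1),
          Polynomial.C (((j : ZMod p) + 1) * α⁻¹ ^ (j + 1)) * X ^ j := by
  have hp : p.Prime := Fact.out
  have hp1 : 1 ≤ p := hp.one_le
  have hαu : α * α⁻¹ = 1 := mul_inv_cancel₀ hα
  set u := α⁻¹ with hu
  set y : (ZMod p)[X] := Polynomial.C u * X with hy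
  have e3 : Polynomial.C α * Polynomial.C u = 1 := by rw [← map_mul, hαu, map_one]
  have hCα : (X - Polynomial.C α) = Polynomial.C α * (y - 1) := by
    rw [hy, mul_sub, mul_one, ← mul_assoc, e3, one_mul]
  have e1 : y ^ p = Polynomial.C u * X ^ p := by
    rw [hy, mul_pow, ← map_pow, ZMod.pow_card]
  have e2 : (Polynomial.C α) ^ p = Polynomial.C α := by
    rw [← map_pow, ZMod.pow_card]
  have hfrob : (X - Polynomial.C α) ^ p = X ^ p - Polynomial.C α := by
    rw [sub_pow_char, e2]
  have hS1 : (X - Polynomial.C α) * ∑ j ∈ Finset.range p, y ^ j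
      = (X - Polynomial.C α) ^ p := by
    rw [hfrob, hCα, mul_assoc, mul_geom_sum]
    linear_combination Polynomial.C α * e1 + (X : (ZMod p)[X]) ^ p * e3
  have hcast : ((p - 1 : ℕ) : (ZMod p)[X]) = -1 := by
    have h1 : ((p - 1 : ℕ) : ZMod p) = -1 := by
      rw [Nat.cast_sub hp1, ZMod.natCast_self, Nat.cast_one, zero_sub]
    rw [← Polynomial.C_eq_natCast, h1, map_neg, map_one]
  have hW : (X - Polynomial.C α)
        * (Polynomial.C u * ∑ j ∈ Finset.range (p - 1), ((j : (ZMod p)[X]) + 1) * y ^ j)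
      = - ∑ j ∈ Finset.range p, y ^ j := by
    have hwg := weighted_geom y (p - 1)
    calc (X - Polynomial.C α)
          * (Polynomial.C u * ∑ j ∈ Finset.range (p - 1), ((j : (ZMod p)[X]) + 1) * y ^ j)
        = (Polynomial.C α * Polynomial.C u)
            * ((y - 1) * ∑ j ∈ Finset.range (p - 1), ((j : (ZMod p)[X]) + 1) * y ^ j) := by
          rw [hCα]; ring
      _ = ((p - 1 : ℕ) : (ZMod p)[X]) * y ^ (p - 1) - ∑ j ∈ Finset.range (p - 1), y ^ j := by
          rw [e3, one_mul, hwg]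
      _ = - (∑ j ∈ Finset.range (p - 1), y ^ j + y ^ (p - 1)) := by rw [hcast]; ring
      _ = - ∑ j ∈ Finset.range p, y ^ j := by
          have hr := Finset.sum_range_succ (fun j => y ^ j) (p - 1)
          rw [show p - 1 + 1 = p by omega] at hr
          rw [hr]
  set S : (ZMod p)[X] := Polynomial.C u * ∑ j ∈ Finset.range (p - 1), ((j : (ZMod p)[X]) + 1) * y ^ j with hS
  have h2 : (X - Polynomial.C α) ^ 2 * S = -(X - Polynomial.C α) ^ p := by
    rw [pow_two, mul_assoc, hW, ← hS1]
    ring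
  have hXC : (X - Polynomial.C α) ≠ 0 := Polynomial.X_sub_C_ne_zero α
  have hcancel : (X - Polynomial.C α) ^ (p - 2) = - S := by
    apply mul_left_cancel₀ (pow_ne_zero 2 hXC)
    rw [← pow_add, show 2 + (p - 2) = p by have := hp.two_le; omega]
    rw [mul_neg, h2, neg_neg]
  rw [hcancel, hS]
  congr 1
  rw [Finset.mul_sum]
  refine Finset.sum_congr rfl (fun j _ => ?_)
  rw [hy]
  simp only [map_mul, map_add, map_one, map_pow, Polynomial.C_eq_natCast, mul_pow, pow_succ]
  ring

theorem tri_p_sub_two_half_sq (p : ℕ) [Fact p.Prime] (hp : p ≠ 2) (c : ZMod p)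
    (hc2 : c ≠ 2) (hc2' : c ≠ -2) (hsq : IsSquare (c ^ 2 - 4)) (hne : c ^ 2 - 4 ≠ 0) :
    triCoeff (ZMod p) c (p - 2) (((p - 1) / 2 : ℕ) : ℤ) =
      c / (2 * (c ^ 2 - 4)) * ((quadraticChar (ZMod p) (-c - 2) : ℤ) : ZMod p) := by
  have hpp : p.Prime := Fact.out
  have hp3 : 3 ≤ p := by
    have h2 := hpp.two_le
    omega
  have hodd : p % 2 = 1 := Nat.odd_iff.mp (hpp.odd_of_ne_two hp)
  obtain ⟨N, hNdef⟩ : ∃ n : ℕ, n = (p - 1) / 2 := ⟨_, rfl⟩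
  rw [show (p - 1) / 2 = N from hNdef.symm]
  have hN : p = 2 * N + 1 := by omega
  have hN1 : 1 ≤ N := by omega
  -- basic field facts
  have h2 : (2 : ZMod p) ≠ 0 := by
    intro h
    have : ((2 : ℕ) : ZMod p) = 0 := by exact_mod_cast h
    rw [ZMod.natCast_eq_zero_iff] at this
    have := Nat.le_of_dvd (by norm_num) this
    omega
  obtain ⟨d, hd⟩ := hsq
  obtain ⟨α, hαdef⟩ : ∃ a : ZMod p, a = (d - c) / 2 := ⟨_, rfl⟩
  have hrel : α ^ 2 + c * α + 1 = 0 := by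
    rw [hαdef]
    field_simp
    linear_combination -hd
  have hα0 : α ≠ 0 := by
    intro h
    rw [h] at hrel
    simp at hrel
  obtain ⟨u, hudef⟩ : ∃ v : ZMod p, v = α⁻¹ := ⟨_, rfl⟩
  have huα : α * u = 1 := by rw [hudef]; exact mul_inv_cancel₀ hα0
  have hu0 : u ≠ 0 := by rw [hudef]; exact inv_ne_zero hα0
  have hurel : u ^ 2 + c * u + 1 = 0 := by
    have h := hrel
    rw [hudef]
    field_simp
    linear_combination hrel
  have hsum : α + u = -c := by
    rw [hudef]
    field_simp
    linear_combination hrel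
  have hα1 : α ≠ 1 := by
    intro h
    apply hc2'
    rw [h] at hrel
    linear_combination hrel
  have hαm1 : α ≠ -1 := by
    intro h
    apply hc2
    rw [h] at hrel
    linear_combination -hrel
  have hu1 : u ≠ 1 := by
    intro h
    rw [h, mul_one] at huα
    exact hα1 huα
  have hum1 : u ≠ -1 := by
    intro h
    rw [h] at huα
    exact hαm1 (by linear_combination -huα)
  have hq1 : u ^ 2 - 1 ≠ 0 := by
    intro h
    have hfac : (u - 1) * (u + 1) = 0 := by linear_combination h
    rcases mul_eq_zero.mp hfac with h' | h'
    · exact hu1 (by linear_combination h')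
    · exact hum1 (by linear_combination h')
  have hNval : (N : ZMod p) = -(2⁻¹ : ZMod p) := by
    have hcast : ((2 * N : ℕ) : ZMod p) = ((p - 1 : ℕ) : ZMod p) := by rw [show 2 * N = p - 1 by omega]
    have h1 : ((p - 1 : ℕ) : ZMod p) = -1 := by
      rw [Nat.cast_sub hpp.one_le, ZMod.natCast_self, Nat.cast_one, zero_sub]
    push_cast at hcast
    rw [h1] at hcast
    have hfin : (2 : ZMod p) * (N : ZMod p) = (2 : ZMod p) * -(2⁻¹ : ZMod p) := by
      rw [hcast, mul_neg, mul_inv_cancel₀ h2]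
    exact mul_left_cancel₀ h2 hfin
  -- continue
  have hsC : Polynomial.C α + Polynomial.C u = - Polynomial.C c := by
    rw [← map_add, hsum, map_neg]
  have hpC : Polynomial.C α * Polynomial.C u = (1 : (ZMod p)[X]) := by
    rw [← map_mul, huα, map_one]
  have hfact : (X ^ 2 + Polynomial.C c * X + 1 : (ZMod p)[X])
      = (X - Polynomial.C α) * (X - Polynomial.C u) := by
    linear_combination (X : (ZMod p)[X]) * hsC - hpC
  rw [triCoeff_eq, hfact, mul_pow, X_sub_C_pow_card_sub_two p α hα0,
      X_sub_C_pow_card_sub_two p u hu0, neg_mul_neg]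
  rw [show α⁻¹ = u from hudef.symm, show u⁻¹ = α by rw [hudef, inv_inv]]
  rw [Polynomial.coeff_mul, Finset.Nat.sum_antidiagonal_eq_sum_range_succ_mk]
  have hco : ∀ (v : ZMod p) (i : ℕ),
      (∑ j ∈ Finset.range (p - 1),
          Polynomial.C (((j : ZMod p) + 1) * v ^ (j + 1)) * X ^ j).coeff i
        = if i < p - 1 then ((i : ZMod p) + 1) * v ^ (i + 1) else 0 := by
    intro v i
    rw [Polynomial.finset_sum_coeff]
    simp only [Polynomial.coeff_C_mul, Polynomial.coeff_X_pow, mul_ite, mul_one, mul_zero]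
    rw [Finset.sum_ite_eq (Finset.range (p - 1)) i]
    simp [Finset.mem_range]
  simp only [hco]
  refine (sum_window N _ (p - 2 + N + 1) (by omega)
      (fun i hi => by
        have hcond : ¬(p - 2 + N - i < p - 1) := by omega
        rw [if_neg hcond, mul_zero])
      (fun i hi => by
        have hcond : ¬(i < p - 1) := by omega
        rw [if_neg hcond, zero_mul])).trans ?_
  have hα2N : α ^ (2 * N) = 1 := by
    rw [show 2 * N = p - 1 by omega]
    exact ZMod.pow_card_sub_one_eq_one hα0
  have hu2N : u ^ N * u ^ N = 1 := by
    rw [← pow_add, show N + N = p - 1 by omega]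
    exact ZMod.pow_card_sub_one_eq_one hu0
  have hαpow : ∀ s : ℕ, s < N → α ^ (2 * N - s) = u ^ s := by
    intro s hs
    have ha1 : α ^ (2 * N - s) * α ^ s = 1 := by
      rw [← pow_add, Nat.sub_add_cancel (by omega), hα2N]
    have ha2 : u ^ s * α ^ s = 1 := by
      rw [← mul_pow, mul_comm u α, huα, one_pow]
    exact mul_right_cancel₀ (pow_ne_zero s hα0) (ha1.trans ha2.symm)
  obtain ⟨G, hG⟩ : ∃ G : ℕ → ZMod p, G = fun (t : ℕ) => u ^ (N + 1) *
      ((-2 * (u ^ 2 - 1) ^ 2 * (t : ZMod p) ^ 2 + (u ^ 2 + 3) * (u ^ 2 - 1) * (t : ZMod p)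
          - (3 * u ^ 2 + 1)) / (2 * (u ^ 2 - 1) ^ 3)) * (u ^ t * u ^ t) := ⟨_, rfl⟩
  refine (Finset.sum_congr (g := fun s => G (s + 1) - G s) rfl (fun s hs => ?_)).trans ?_
  · show _ = G (s + 1) - G s
    have hs' : s < N := Finset.mem_range.mp hs
    rw [if_pos (by omega), if_pos (by omega)]
    rw [show p - 2 + N - (N + s) = 2 * N - 1 - s by omega]
    rw [show 2 * N - 1 - s + 1 = 2 * N - s by omega]
    rw [hαpow s hs']
    rw [show N + s + 1 = (N + 1) + s by omega, pow_add]
    rw [show (2 : ℕ) * N - 1 - s = 2 * N - (1 + s) by omega,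
        Nat.cast_sub (by omega : 1 + s ≤ 2 * N), Nat.cast_add, Nat.cast_add, Nat.cast_mul]
    rw [hG]
    simp only []
    rw [hNval, pow_succ u s]
    push_cast
    field_simp
    ring
  rw [Finset.sum_range_sub G]
  have hχ : ((quadraticChar (ZMod p) (-c - 2) : ℤ) : ZMod p) = u ^ N := by
    have hF2 : ringChar (ZMod p) ≠ 2 := by
      rw [ZMod.ringChar_zmod_n]; exact hp
    rw [quadraticChar_eq_pow_of_char_ne_two' hF2]
    rw [ZMod.card, show p / 2 = N by omega]
    have hfac : (-c - 2 : ZMod p) = (α - 1) ^ 2 * u := by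
      linear_combination -hsum + (2 - α) * huα
    rw [hfac, mul_pow, ← pow_mul, show 2 * N = p - 1 by omega,
        ZMod.pow_card_sub_one_eq_one (sub_ne_zero.mpr hα1), one_mul]
  rw [hχ]
  have hfinal : u * (-(u ^ 2 + 1) / (2 * (u ^ 2 - 1) ^ 2)) = c / (2 * (c ^ 2 - 4)) := by
    have hnum : -(u ^ 2 + 1) = c * u := by linear_combination -hurel
    have hden : (u ^ 2 - 1) ^ 2 = (c ^ 2 - 4) * u ^ 2 := by
      linear_combination (u ^ 2 + 1 - c * u) * hurel
    rw [hnum, hden]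
    field_simp
  calc G N - G 0 = u ^ N * (u * (-(u ^ 2 + 1) / (2 * (u ^ 2 - 1) ^ 2))) := by
        rw [hG]
        simp only []
        rw [hu2N, hNval, pow_succ u N]
        push_cast
        field_simp [hq1, h2]
        ring
    _ = u ^ N * (c / (2 * (c ^ 2 - 4))) := by rw [hfinal]
    _ = c / (2 * (c ^ 2 - 4)) * u ^ N := mul_comm _ _
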